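/- For any n ≥ 1 and any e_1, …, e_n ∈ [0,∞], the Bonferroni value B(e_1,…,e_n) := (1/n) max_i e_i and the Simes value S(e_1,…,e_n) := max_{i ∈ {1,…,n}} (i · e_{[i]} / n), where e_{[1]} ≥ ⋯ ≥ e_{[n]} is the decreasing rearrangement of e_1,…,e_n, satisfy B(e_1,…,e_n) ≤ S(e_1,…,e_n) ≤ (1/n) ∑_{i=1}^n e_i. Consequently, if E_1, …, E_n are e-variables with respect to a probability measure Q, then both B(E_1,…,E_n) and S(E_1,…,E_n) are e-variables with respect to Q. -/

import Mathlib

open scoped ENNReal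
open MeasureTheory

/-- The list of the values `v 0, …, v (n-1)` sorted in ascending order. -/
noncomputable def ascSortE {n : ℕ} (v : Fin n → ℝ≥0∞) : List ℝ≥0∞ :=
  (Multiset.map v Finset.univ.val).sort (· ≤ ·)

/-- The `i`-th largest value (`i` one-indexed, so `i = i₀ + 1` for `i₀ : Fin n`)
among `v 0, …, v (n-1)`: the entry at position `n - 1 - i₀` of the ascending sort. -/
noncomputable def ithLargestE {n : ℕ} (v : Fin n → ℝ≥0∞) (i : Fin n) : ℝ≥0∞ :=
  (ascSortE v).getD (n - 1 - (i : ℕ)) 0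

/-- The Simes e-merging function `S(e₁,…,eₙ) := max_i (i · e_{[i]} / n)`,
where `e_{[1]} ≥ ⋯ ≥ e_{[n]}` is the decreasing rearrangement. -/
noncomputable def simesE {n : ℕ} (v : Fin n → ℝ≥0∞) : ℝ≥0∞ :=
  ⨆ i : Fin n, (((i : ℕ) + 1 : ℕ) : ℝ≥0∞) * ithLargestE v i / n

/-- The Bonferroni e-merging function `B(e₁,…,eₙ) := (1/n) max_i e_i`. -/
noncomputable def bonferroniE {n : ℕ} (v : Fin n → ℝ≥0∞) : ℝ≥0∞ :=
  (⨆ i, v i) / n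

lemma ascSortE_length {n : ℕ} (v : Fin n → ℝ≥0∞) : (ascSortE v).length = n := by
  simp [ascSortE]

lemma ascSortE_sorted {n : ℕ} (v : Fin n → ℝ≥0∞) : (ascSortE v).Pairwise (· ≤ ·) :=
  Multiset.pairwise_sort _ _

lemma ascSortE_sum {n : ℕ} (v : Fin n → ℝ≥0∞) : (ascSortE v).sum = ∑ i, v i := by
  have : ((ascSortE v : List ℝ≥0∞) : Multiset ℝ≥0∞) = Multiset.map v Finset.univ.val :=
    Multiset.sort_eq _ _
  rw [Finset.sum, ← this]
  simp

lemma ascSortE_mem {n : ℕ} (v : Fin n → ℝ≥0∞) (x : ℝ≥0∞) :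
    x ∈ ascSortE v ↔ ∃ j, v j = x := by
  simp [ascSortE, List.mem_ofFn, eq_comm, Set.mem_range]

lemma ascSortE_getD_last {n : ℕ} (v : Fin n → ℝ≥0∞) (hn : 1 ≤ n) :
    (ascSortE v).getD (n - 1) 0 = ⨆ j, v j := by
  have hlen := ascSortE_length v
  have hk : n - 1 < (ascSortE v).length := by omega
  have hget : (ascSortE v).getD (n - 1) 0 = (ascSortE v).get ⟨n - 1, hk⟩ := by
    rw [List.getD_eq_getElem _ _ hk]; rfl
  apply le_antisymm
  · rw [hget]
    obtain ⟨j, hj⟩ := (ascSortE_mem v _).1 (List.get_mem _ ⟨n - 1, hk⟩)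
    exact hj ▸ le_iSup v j
  · refine iSup_le fun j => ?_
    obtain ⟨m, hm⟩ := List.mem_iff_get.1 ((ascSortE_mem v (v j)).2 ⟨j, rfl⟩)
    rw [hget, ← hm]
    exact (ascSortE_sorted v).rel_get_of_le (by simp [Fin.le_def]; omega)

lemma mul_getD_le_sum {n : ℕ} (v : Fin n → ℝ≥0∞) (k : ℕ) (hk : k < n) :
    ((n - k : ℕ) : ℝ≥0∞) * (ascSortE v).getD k 0 ≤ ∑ i, v i := by
  have hlen := ascSortE_length v
  have hk' : k < (ascSortE v).length := by omega
  set l := ascSortE v with hl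
  set a := l.getD k 0 with ha
  have hmem : ∀ x ∈ l.drop k, a ≤ x := by
    intro x hx
    obtain ⟨m, hm⟩ := List.mem_iff_get.1 hx
    have hidx : k + (m : ℕ) < l.length := by
      have := m.isLt; simp only [List.length_drop] at this; omega
    have hle : l.get ⟨k, hk'⟩ ≤ l.get ⟨k + (m : ℕ), hidx⟩ :=
      (ascSortE_sorted v).rel_get_of_le (by simp [Fin.le_def])
    have hx2 : (l.drop k).get m = l.get ⟨k + (m : ℕ), hidx⟩ := by
      show (l.drop k)[(m : ℕ)] = l[k + (m : ℕ)]
      rw [List.getElem_drop]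
    rw [← hm, ha, List.getD_eq_getElem _ _ hk', hx2]
    exact hle
  have hcard : (l.drop k).length = n - k := by simp [hlen]
  have := Multiset.card_nsmul_le_sum (s := (l.drop k : Multiset ℝ≥0∞)) (a := a)
    (by simpa using hmem)
  rw [← ascSortE_sum v, ← List.sum_take_add_sum_drop l k]
  calc ((n - k : ℕ) : ℝ≥0∞) * a = (l.drop k).length • a := by
        rw [hcard, nsmul_eq_mul]
    _ ≤ (l.drop k).sum := by simpa using this
    _ ≤ (l.take k).sum + (l.drop k).sum := le_add_self


lemma bonferroniE_le_simesE {n : ℕ} (hn : 1 ≤ n) (v : Fin n → ℝ≥0∞) :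
    bonferroniE v ≤ simesE v := by
  have h0 : (0 : ℕ) < n := hn
  refine le_trans ?_ (le_iSup _ (⟨0, h0⟩ : Fin n))
  simp only [ithLargestE, Fin.val_mk, Nat.sub_zero, Nat.cast_one, zero_add,
    Nat.cast_ofNat, one_mul]
  rw [ascSortE_getD_last v hn]
  exact le_of_eq rfl

lemma simesE_le_mean {n : ℕ} (hn : 1 ≤ n) (v : Fin n → ℝ≥0∞) :
    simesE v ≤ (∑ i, v i) / n := by
  refine iSup_le fun i => ?_
  apply ENNReal.div_le_div_right
  have hk : n - 1 - (i : ℕ) < n := by have := i.isLt; omega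
  have := mul_getD_le_sum v (n - 1 - (i : ℕ)) hk
  have hcast : n - (n - 1 - (i : ℕ)) = (i : ℕ) + 1 := by have := i.isLt; omega
  rw [hcast] at this
  exact this

theorem bonferroni_le_simes_le_mean_and_e_variables
    {Ω : Type*} [MeasurableSpace Ω] (Q : Measure Ω) [IsProbabilityMeasure Q]
    (n : ℕ) (hn : 1 ≤ n) (e : Fin n → ℝ≥0∞)
    (E : Fin n → Ω → ℝ≥0∞) (hmeas : ∀ i, Measurable (E i))
    (hE : ∀ i, ∫⁻ ω, E i ω ∂Q ≤ 1) :
    bonferroniE e ≤ simesE e ∧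
    simesE e ≤ (∑ i, e i) / n ∧
    (∫⁻ ω, bonferroniE (fun i => E i ω) ∂Q ≤ 1) ∧
    (∫⁻ ω, simesE (fun i => E i ω) ∂Q ≤ 1) := by
  have hsimes : (∫⁻ ω, simesE (fun i => E i ω) ∂Q) ≤ 1 := by
    calc (∫⁻ ω, simesE (fun i => E i ω) ∂Q)
        ≤ ∫⁻ ω, (∑ i, E i ω) / n ∂Q :=
          lintegral_mono fun ω => simesE_le_mean hn _
      _ = (∑ i, ∫⁻ ω, E i ω ∂Q) / n := by
          simp_rw [div_eq_mul_inv]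
          rw [lintegral_mul_const' _ _ (by simp; omega), lintegral_finset_sum _ fun i _ => hmeas i]
      _ ≤ ((n : ℝ≥0∞)) / n := by
          apply ENNReal.div_le_div_right
          calc (∑ i, ∫⁻ ω, E i ω ∂Q) ≤ ∑ _i : Fin n, (1 : ℝ≥0∞) :=
                Finset.sum_le_sum fun i _ => hE i
            _ = n := by simp
      _ ≤ 1 := ENNReal.div_self_le_one
  refine ⟨bonferroniE_le_simesE hn e, simesE_le_mean hn e, ?_, hsimes⟩
  exact le_trans (lintegral_mono fun ω => bonferroniE_le_simesE hn _) hsimes
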